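/- If A ⊆ B is a flat ring extension that is also integral, and B is contained in the total quotient ring of A (i.e., B is an overring of A), then A = B. -/

import Mathlib

set_option synthInstance.maxHeartbeats 400000
set_option maxHeartbeats 1600000



private lemma ulift_sum_two {M : Type*} [AddCommMonoid M] (f : ULift.{u} (Fin 2) → M) :
    ∑ i, f i = f ⟨0⟩ + f ⟨1⟩ := by
  rw [← Equiv.sum_comp (Equiv.ulift.symm) f, Fin.sum_univ_two]; rfl

theorem statement1 (A : Type*) [CommRing A]
    (B : Subalgebra A (Localization (nonZeroDivisors A)))
    [Module.Flat A B] [Algebra.IsIntegral A B] : B = ⊥ := by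
  set K := Localization (nonZeroDivisors A)
  -- algebraMap A K is injective
  have hinj : Function.Injective (algebraMap A K) :=
    IsLocalization.injective K (le_refl (nonZeroDivisors A))
  have hinjB : Function.Injective (algebraMap A B) := by
    intro a b h
    apply hinj
    have := congrArg (Subtype.val) h
    simpa using this
  rw [eq_bot_iff]
  rintro x hx
  -- write x = a / s
  obtain ⟨⟨a, s⟩, hs0⟩ := IsLocalization.surj (nonZeroDivisors A) x
  have hs : x * algebraMap A K s = algebraMap A K a := hs0
  -- the colon ideal I = (A : x)
  set I : Ideal A := { carrier := {c : A | ∃ d : A, algebraMap A K c * x = algebraMap A K d}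
                       add_mem' := by
                         rintro c₁ c₂ ⟨d₁, h₁⟩ ⟨d₂, h₂⟩
                         exact ⟨d₁ + d₂, by rw [map_add, map_add, add_mul, h₁, h₂]⟩
                       zero_mem' := ⟨0, by simp⟩
                       smul_mem' := by
                         rintro c₁ c₂ ⟨d, h⟩
                         exact ⟨c₁ * d, by rw [smul_eq_mul, map_mul, map_mul, mul_assoc, h]⟩ }
  -- the relation s • x - a • 1 = 0 in B
  set xB : B := ⟨x, hx⟩
  have hrel : ∑ i : ULift.{0} (Fin 2), (![(s : A), -a] i.down) • (![xB, 1] i.down) = 0 := by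
    rw [ulift_sum_two]
    apply Subtype.ext
    simp only [Matrix.cons_val_zero, Matrix.cons_val_one, Matrix.head_cons]
    push_cast
    rw [Algebra.smul_def, Algebra.smul_def, map_neg, mul_one]
    linear_combination hs
  obtain ⟨κ, c, y, hy, hc⟩ := Module.Flat.isTrivialRelation_of_sum_smul_eq_zero hrel
  -- each c ⟨1⟩ j is in I
  have hmem : ∀ j, c ⟨1⟩ j ∈ I := by
    intro j
    have hcj := hc j
    rw [ulift_sum_two] at hcj
    simp only [Matrix.cons_val_zero, Matrix.cons_val_one, Matrix.head_cons] at hcj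
    refine ⟨c ⟨0⟩ j, ?_⟩
    have hu : IsUnit (algebraMap A K s) := IsLocalization.map_units K s
    apply hu.mul_left_cancel
    rw [mul_comm ((algebraMap A K) (s : A)), mul_assoc, hs, ← map_mul, ← map_mul]
    congr 1
    linear_combination -hcj
  -- hence 1 ∈ I.map (algebraMap A B)
  have hone : (1 : B) ∈ I.map (algebraMap A B) := by
    have h1 : (1 : B) = ∑ j, c ⟨1⟩ j • y j := hy ⟨1⟩
    rw [h1]
    refine Ideal.sum_mem _ fun j _ => ?_
    rw [Algebra.smul_def]
    exact Ideal.mul_mem_right _ _ (Ideal.mem_map_of_mem _ (hmem j))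
  have htop : I.map (algebraMap A B) = ⊤ := (Ideal.eq_top_iff_one _).mpr hone
  have hItop : I = ⊤ := by
    rwa [Ideal.map_eq_top_iff_of_ker_le (algebraMap A B)
      (by rw [(RingHom.injective_iff_ker_eq_bot _).mp hinjB]; exact bot_le)
      (fun z => Algebra.isIntegral_def.mp inferInstance z)] at htop
  obtain ⟨d, hd⟩ : (1 : A) ∈ I := hItop ▸ Submodule.mem_top
  rw [map_one, one_mul] at hd
  exact ⟨d, hd.symm⟩
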